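/- arXiv:2506.03595 — 3 statements merged into one kernel-verified Lean document; each statement's English description precedes it below -/
import Mathlib

section
/- Let m, n be positive integers, let Q_L ∈ ℝ^{m×m} and Q_R ∈ ℝ^{n×n} be orthogonal matrices, let D ∈ ℝ^{m×n} have all entries strictly positive, let G ∈ ℝ^{m×n}, and let p > 0. Define U = Q_L (D^{⊙(-p)} ⊙ (Q_Lᵀ G Q_R)) Q_Rᵀ ∈ ℝ^{m×n}, where D^{⊙(-p)} is the entrywise (-p)-th power. Then (max_{i,j} D_{i,j})^{-p} · ‖G‖_F ≤ ‖U‖_F ≤ (min_{i,j} D_{i,j})^{-p} · ‖G‖_F. -/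
open Matrix Finset

/-- Frobenius norm of a real matrix: square root of the sum of squares of all entries. -/
noncomputable def frobeniusNorm' {m n : Type*} [Fintype m] [Fintype n]
    (M : Matrix m n ℝ) : ℝ :=
  Real.sqrt (∑ i, ∑ j, (M i j) ^ 2)

lemma frobSq_eq_trace {m n : Type*} [Fintype m] [Fintype n] (M : Matrix m n ℝ) :
    ∑ i, ∑ j, (M i j) ^ 2 = Matrix.trace (Mᵀ * M) := by
  rw [Finset.sum_comm]
  simp [Matrix.trace, Matrix.mul_apply, Matrix.diag, sq]

lemma frobSq_conj {m n : Type*} [Fintype m] [Fintype n] [DecidableEq m] [DecidableEq n]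
    (QL : Matrix m m ℝ) (QR : Matrix n n ℝ)
    (hQL : QLᵀ * QL = 1) (hQR : QRᵀ * QR = 1) (X : Matrix m n ℝ) :
    ∑ i, ∑ j, ((QL * X * QRᵀ) i j) ^ 2 = ∑ i, ∑ j, (X i j) ^ 2 := by
  rw [frobSq_eq_trace, frobSq_eq_trace]
  have : (QL * X * QRᵀ)ᵀ * (QL * X * QRᵀ) = QR * (Xᵀ * X) * QRᵀ := by
    simp only [Matrix.transpose_mul, Matrix.transpose_transpose]
    rw [show QR * (Xᵀ * QLᵀ) * (QL * X * QRᵀ) = QR * (Xᵀ * (QLᵀ * QL * (X * QRᵀ))) from by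
      simp only [Matrix.mul_assoc], hQL, Matrix.one_mul]
    simp only [Matrix.mul_assoc]
  rw [this, Matrix.trace_mul_cycle, ← Matrix.mul_assoc, hQR, Matrix.one_mul]

/-- For orthogonal `Q_L ∈ ℝ^{m×m}`, `Q_R ∈ ℝ^{n×n}`, an entrywise-positive
scaling matrix `D ∈ ℝ^{m×n}`, a gradient `G ∈ ℝ^{m×n}` and `p > 0`, the generalized
eigendecomposed Kronecker-factored update
`U = Q_L (D^{⊙(-p)} ⊙ (Q_Lᵀ G Q_R)) Q_Rᵀ` satisfies
`(max_{i,j} D_{i,j})^{-p} ‖G‖_F ≤ ‖U‖_F ≤ (min_{i,j} D_{i,j})^{-p} ‖G‖_F`. -/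
theorem stmt_0 (m n : ℕ) [NeZero m] [NeZero n]
    (QL : Matrix (Fin m) (Fin m) ℝ) (QR : Matrix (Fin n) (Fin n) ℝ)
    (hQL : QLᵀ * QL = 1) (hQR : QRᵀ * QR = 1)
    (D G : Matrix (Fin m) (Fin n) ℝ) (hD : ∀ i j, 0 < D i j)
    (p : ℝ) (hp : 0 < p)
    (U : Matrix (Fin m) (Fin n) ℝ)
    (hU : U = QL * (Matrix.of fun i j => (D i j) ^ (-p) * ((QLᵀ * G * QR) i j)) * QRᵀ) :
    (Finset.univ.sup' Finset.univ_nonempty (fun ij : Fin m × Fin n => D ij.1 ij.2)) ^ (-p)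
        * frobeniusNorm' G ≤ frobeniusNorm' U ∧
      frobeniusNorm' U ≤
        (Finset.univ.inf' Finset.univ_nonempty (fun ij : Fin m × Fin n => D ij.1 ij.2)) ^ (-p)
          * frobeniusNorm' G := by
  set H : Matrix (Fin m) (Fin n) ℝ := QLᵀ * G * QR with hH
  set X : Matrix (Fin m) (Fin n) ℝ :=
    Matrix.of fun i j => (D i j) ^ (-p) * (H i j) with hX
  set Dmax := Finset.univ.sup' Finset.univ_nonempty (fun ij : Fin m × Fin n => D ij.1 ij.2)
  set Dmin := Finset.univ.inf' Finset.univ_nonempty (fun ij : Fin m × Fin n => D ij.1 ij.2)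
  obtain ⟨⟨i0, j0⟩, _, hmaxeq⟩ := Finset.exists_mem_eq_sup' (Finset.univ_nonempty)
    (fun ij : Fin m × Fin n => D ij.1 ij.2)
  obtain ⟨⟨i1, j1⟩, _, hmineq⟩ := Finset.exists_mem_eq_inf' (Finset.univ_nonempty)
    (fun ij : Fin m × Fin n => D ij.1 ij.2)
  have hmaxpos : 0 < Dmax := lt_of_lt_of_eq (hD i0 j0) hmaxeq.symm
  have hminpos : 0 < Dmin := lt_of_lt_of_eq (hD i1 j1) hmineq.symm
  have hle_max : ∀ i j, D i j ≤ Dmax := fun i j =>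
    Finset.le_sup' (fun ij : Fin m × Fin n => D ij.1 ij.2) (Finset.mem_univ (i, j))
  have hmin_le : ∀ i j, Dmin ≤ D i j := fun i j =>
    Finset.inf'_le (fun ij : Fin m × Fin n => D ij.1 ij.2) (Finset.mem_univ (i, j))
  -- norm of U equals norm of X
  have hUX : ∑ i, ∑ j, (U i j) ^ 2 = ∑ i, ∑ j, (X i j) ^ 2 := by
    rw [hU]; exact frobSq_conj QL QR hQL hQR X
  -- norm of G equals norm of H
  have hGH : ∑ i, ∑ j, (G i j) ^ 2 = ∑ i, ∑ j, (H i j) ^ 2 := by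
    have hG : G = QL * H * QRᵀ := by
      rw [hH]
      calc G = (QL * QLᵀ) * G * (QR * QRᵀ) := by
              rw [mul_eq_one_comm.mp hQL, mul_eq_one_comm.mp hQR]
              simp
        _ = QL * (QLᵀ * G * QR) * QRᵀ := by simp only [Matrix.mul_assoc]
    conv_lhs => rw [hG]
    exact frobSq_conj QL QR hQL hQR H
  -- entrywise bounds
  have hXlow : ∀ i j, (Dmax ^ (-p)) ^ 2 * (H i j) ^ 2 ≤ (X i j) ^ 2 := by
    intro i j
    have h1 : Dmax ^ (-p) ≤ (D i j) ^ (-p) :=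
      Real.rpow_le_rpow_of_nonpos (hD i j) (hle_max i j) (neg_nonpos.mpr hp.le)
    have h0 : (0:ℝ) ≤ Dmax ^ (-p) := Real.rpow_nonneg hmaxpos.le _
    have : (Dmax ^ (-p)) ^ 2 ≤ ((D i j) ^ (-p)) ^ 2 := by
      apply pow_le_pow_left₀ h0 h1
    calc (Dmax ^ (-p)) ^ 2 * (H i j) ^ 2 ≤ ((D i j) ^ (-p)) ^ 2 * (H i j) ^ 2 :=
          mul_le_mul_of_nonneg_right this (sq_nonneg _)
      _ = (X i j) ^ 2 := by rw [hX]; simp [mul_pow]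
  have hXhigh : ∀ i j, (X i j) ^ 2 ≤ (Dmin ^ (-p)) ^ 2 * (H i j) ^ 2 := by
    intro i j
    have h1 : (D i j) ^ (-p) ≤ Dmin ^ (-p) :=
      Real.rpow_le_rpow_of_nonpos hminpos (hmin_le i j) (neg_nonpos.mpr hp.le)
    have h0 : (0:ℝ) ≤ (D i j) ^ (-p) := Real.rpow_nonneg (hD i j).le _
    have : ((D i j) ^ (-p)) ^ 2 ≤ (Dmin ^ (-p)) ^ 2 := by
      apply pow_le_pow_left₀ h0 h1
    calc (X i j) ^ 2 = ((D i j) ^ (-p)) ^ 2 * (H i j) ^ 2 := by rw [hX]; simp [mul_pow]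
      _ ≤ (Dmin ^ (-p)) ^ 2 * (H i j) ^ 2 := mul_le_mul_of_nonneg_right this (sq_nonneg _)
  have hSumLow : (Dmax ^ (-p)) ^ 2 * (∑ i, ∑ j, (H i j) ^ 2) ≤ ∑ i, ∑ j, (X i j) ^ 2 := by
    rw [Finset.mul_sum]
    refine Finset.sum_le_sum fun i _ => ?_
    rw [Finset.mul_sum]
    exact Finset.sum_le_sum fun j _ => hXlow i j
  have hSumHigh : (∑ i, ∑ j, (X i j) ^ 2) ≤ (Dmin ^ (-p)) ^ 2 * (∑ i, ∑ j, (H i j) ^ 2) := by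
    rw [Finset.mul_sum]
    refine Finset.sum_le_sum fun i _ => ?_
    rw [Finset.mul_sum]
    exact Finset.sum_le_sum fun j _ => hXhigh i j
  have hmax0 : (0:ℝ) ≤ Dmax ^ (-p) := Real.rpow_nonneg hmaxpos.le _
  have hmin0 : (0:ℝ) ≤ Dmin ^ (-p) := Real.rpow_nonneg hminpos.le _
  constructor
  · unfold frobeniusNorm'
    rw [hGH]
    calc Dmax ^ (-p) * Real.sqrt (∑ i, ∑ j, (H i j) ^ 2)
        = Real.sqrt ((Dmax ^ (-p)) ^ 2 * (∑ i, ∑ j, (H i j) ^ 2)) := by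
          rw [Real.sqrt_mul (sq_nonneg _), Real.sqrt_sq hmax0]
      _ ≤ Real.sqrt (∑ i, ∑ j, (U i j) ^ 2) := by
          apply Real.sqrt_le_sqrt; rw [hUX]; exact hSumLow
  · unfold frobeniusNorm'
    rw [hGH]
    calc Real.sqrt (∑ i, ∑ j, (U i j) ^ 2)
        ≤ Real.sqrt ((Dmin ^ (-p)) ^ 2 * (∑ i, ∑ j, (H i j) ^ 2)) := by
          apply Real.sqrt_le_sqrt; rw [hUX]; exact hSumHigh
      _ = Dmin ^ (-p) * Real.sqrt (∑ i, ∑ j, (H i j) ^ 2) := by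
          rw [Real.sqrt_mul (sq_nonneg _), Real.sqrt_sq hmin0]
end

section
/- Let m, n be positive integers and let A ∈ ℝ^{(mn)×(mn)} be symmetric positive definite, with rows and columns indexed by pairs (i,j) with 1 ≤ i ≤ m, 1 ≤ j ≤ n. Let G ∈ ℝ^{m×n} and p > 0. Define D ∈ ℝ^{m×n} by D_{i,j} = A_{(i,j),(i,j)} (the diagonal of A), and define the diagonal (Adam-style) update U = D^{⊙(-p)} ⊙ G. Then λ_max(A)^{-p} · ‖G‖_F ≤ ‖U‖_F ≤ λ_min(A)^{-p} · ‖G‖_F, where λ_min(A) and λ_max(A) are the smallest and largest eigenvalues of A. -/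
open Matrix Finset

lemma diag_bounds {ι : Type*} [Fintype ι] [DecidableEq ι] [Nonempty ι]
    {A : Matrix ι ι ℝ} (hA : A.IsHermitian) (k : ι) :
    (Finset.univ.inf' Finset.univ_nonempty hA.eigenvalues) ≤ A k k ∧
      A k k ≤ (Finset.univ.sup' Finset.univ_nonempty hA.eigenvalues) := by
  have hAkk : A k k = ∑ i, hA.eigenvalues i *
      ((hA.eigenvectorUnitary : Matrix ι ι ℝ) k i) ^ 2 := by
    nth_rewrite 1 [hA.spectral_theorem]
    rw [Unitary.conjStarAlgAut_apply, Matrix.mul_apply]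
    refine Finset.sum_congr rfl fun i _ => ?_
    rw [Matrix.mul_apply]
    simp [Matrix.diagonal_apply, ite_mul, Finset.sum_ite_eq', Matrix.star_apply]
    ring
  have hsum1 : ∑ i, ((hA.eigenvectorUnitary : Matrix ι ι ℝ) k i) ^ 2 = 1 := by
    have h := Matrix.mem_unitaryGroup_iff.mp hA.eigenvectorUnitary.2
    have := congrArg (fun M => M k k) h
    simpa [Matrix.mul_apply, Matrix.one_apply, Matrix.star_apply, sq] using this
  constructor
  · rw [hAkk]
    calc (Finset.univ.inf' Finset.univ_nonempty hA.eigenvalues)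
        = ∑ i, (Finset.univ.inf' Finset.univ_nonempty hA.eigenvalues) *
            ((hA.eigenvectorUnitary : Matrix ι ι ℝ) k i) ^ 2 := by
          rw [← Finset.mul_sum, hsum1, mul_one]
      _ ≤ ∑ i, hA.eigenvalues i * ((hA.eigenvectorUnitary : Matrix ι ι ℝ) k i) ^ 2 :=
          Finset.sum_le_sum fun i _ =>
            mul_le_mul_of_nonneg_right (Finset.inf'_le _ (Finset.mem_univ i)) (sq_nonneg _)
  · rw [hAkk]
    calc ∑ i, hA.eigenvalues i * ((hA.eigenvectorUnitary : Matrix ι ι ℝ) k i) ^ 2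
        ≤ ∑ i, (Finset.univ.sup' Finset.univ_nonempty hA.eigenvalues) *
            ((hA.eigenvectorUnitary : Matrix ι ι ℝ) k i) ^ 2 :=
          Finset.sum_le_sum fun i _ =>
            mul_le_mul_of_nonneg_right (Finset.le_sup' _ (Finset.mem_univ i)) (sq_nonneg _)
      _ = _ := by rw [← Finset.mul_sum, hsum1, mul_one]

/-- Let `A ∈ ℝ^{(mn)×(mn)}` be symmetric positive definite (indexed by pairs
`(i,j)`), `G ∈ ℝ^{m×n}`, `p > 0`.  With the diagonal scaling `D_{i,j} = A_{(i,j),(i,j)}` and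
the diagonal (Adam-style) update `U = D^{⊙(-p)} ⊙ G`, one has
`λ_max(A)^{-p} ‖G‖_F ≤ ‖U‖_F ≤ λ_min(A)^{-p} ‖G‖_F`. -/
theorem stmt_5 (m n : ℕ) [NeZero m] [NeZero n]
    (A : Matrix (Fin m × Fin n) (Fin m × Fin n) ℝ) (hA : A.IsHermitian) (hApd : A.PosDef)
    (G : Matrix (Fin m) (Fin n) ℝ) (p : ℝ) (hp : 0 < p)
    (D : Matrix (Fin m) (Fin n) ℝ) (hD : ∀ i j, D i j = A (i, j) (i, j))
    (U : Matrix (Fin m) (Fin n) ℝ)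
    (hU : U = Matrix.of fun i j => (D i j) ^ (-p) * G i j) :
    (Finset.univ.sup' Finset.univ_nonempty hA.eigenvalues) ^ (-p) * frobeniusNorm' G ≤
        frobeniusNorm' U ∧
      frobeniusNorm' U ≤
        (Finset.univ.inf' Finset.univ_nonempty hA.eigenvalues) ^ (-p) * frobeniusNorm' G := by
  set lmin := Finset.univ.inf' Finset.univ_nonempty hA.eigenvalues with hlmin
  set lmax := Finset.univ.sup' Finset.univ_nonempty hA.eigenvalues with hlmax
  have hlminpos : 0 < lmin := by
    obtain ⟨i, _, hi⟩ := Finset.exists_mem_eq_inf' Finset.univ_nonempty hA.eigenvalues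
    rw [hlmin, hi]
    exact hApd.eigenvalues_pos i
  have hnegp : -p ≤ 0 := by linarith
  have hminmax : lmin ≤ lmax := le_trans
    (Finset.inf'_le _ (Finset.mem_univ (Classical.arbitrary _)))
    (Finset.le_sup' _ (Finset.mem_univ _))
  -- entrywise bounds
  have key : ∀ i j, (lmax ^ (-p)) ^ 2 * (G i j) ^ 2 ≤ (U i j) ^ 2 ∧
      (U i j) ^ 2 ≤ (lmin ^ (-p)) ^ 2 * (G i j) ^ 2 := by
    intro i j
    have hdb := diag_bounds hA (i, j)
    rw [← hD i j] at hdb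
    have hDpos : 0 < D i j := lt_of_lt_of_le hlminpos hdb.1
    have h1 : lmax ^ (-p) ≤ (D i j) ^ (-p) :=
      Real.rpow_le_rpow_of_nonpos hDpos hdb.2 hnegp
    have h2 : (D i j) ^ (-p) ≤ lmin ^ (-p) :=
      Real.rpow_le_rpow_of_nonpos hlminpos hdb.1 hnegp
    have hUij : (U i j) ^ 2 = ((D i j) ^ (-p)) ^ 2 * (G i j) ^ 2 := by
      rw [hU]; simp [mul_pow]
    have hmaxnn : (0:ℝ) ≤ lmax ^ (-p) :=
      Real.rpow_nonneg (le_trans hlminpos.le hminmax) _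
    constructor
    · rw [hUij]
      exact mul_le_mul_of_nonneg_right (pow_le_pow_left₀ hmaxnn h1 2) (sq_nonneg _)
    · rw [hUij]
      refine mul_le_mul_of_nonneg_right (pow_le_pow_left₀ ?_ h2 2) (sq_nonneg _)
      exact Real.rpow_nonneg hDpos.le _
  have hsum1 : (lmax ^ (-p)) ^ 2 * (∑ i, ∑ j, (G i j) ^ 2) ≤ ∑ i, ∑ j, (U i j) ^ 2 := by
    rw [Finset.mul_sum]
    refine Finset.sum_le_sum fun i _ => ?_
    rw [Finset.mul_sum]
    exact Finset.sum_le_sum fun j _ => (key i j).1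
  have hsum2 : ∑ i, ∑ j, (U i j) ^ 2 ≤ (lmin ^ (-p)) ^ 2 * (∑ i, ∑ j, (G i j) ^ 2) := by
    rw [Finset.mul_sum]
    refine Finset.sum_le_sum fun i _ => ?_
    rw [Finset.mul_sum]
    exact Finset.sum_le_sum fun j _ => (key i j).2
  have hmaxnn : (0:ℝ) ≤ lmax ^ (-p) :=
    Real.rpow_nonneg (le_trans hlminpos.le hminmax) _
  have hminnn : (0:ℝ) ≤ lmin ^ (-p) := Real.rpow_nonneg hlminpos.le _
  constructor
  · have : lmax ^ (-p) * frobeniusNorm' G = Real.sqrt ((lmax ^ (-p)) ^ 2 * ∑ i, ∑ j, (G i j) ^ 2) := by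
      rw [frobeniusNorm', Real.sqrt_mul (sq_nonneg _), Real.sqrt_sq hmaxnn]
    rw [this, frobeniusNorm']
    exact Real.sqrt_le_sqrt hsum1
  · have : lmin ^ (-p) * frobeniusNorm' G = Real.sqrt ((lmin ^ (-p)) ^ 2 * ∑ i, ∑ j, (G i j) ^ 2) := by
      rw [frobeniusNorm', Real.sqrt_mul (sq_nonneg _), Real.sqrt_sq hminnn]
    rw [this, frobeniusNorm']
    exact Real.sqrt_le_sqrt hsum2
end

section
/- Let m, n be positive integers. Let Q_L ∈ ℝ^{m×m} and Q_R ∈ ℝ^{n×n} be orthogonal and let Λ_L ∈ ℝ^{m×m}, Λ_R ∈ ℝ^{n×n} be diagonal with nonnegative entries. Set Q = Q_R ⊗ Q_L and define the Shampoo preconditioner C^Shampoo = Q (Λ_R ⊗ Λ_L)^{1/2} Qᵀ, where (Λ_R ⊗ Λ_L)^{1/2} is the diagonal matrix with the entrywise square roots of the diagonal of Λ_R ⊗ Λ_L. Then for every matrix C ∈ ℝ^{(mn)×(mn)}, ‖C - Q · diag(Qᵀ C Q) · Qᵀ‖_F ≤ ‖C - C^Shampoo‖_F, i.e., the optimal eigenvalue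 correction in Shampoo's eigenbasis yields a Frobenius-norm approximation of C at least as tight as Shampoo's preconditioner. -/
open Matrix Finset Kronecker

/-- The diagonal part of a square matrix: zero out all off-diagonal entries. -/
def diagPart {d : Type*} [DecidableEq d] (M : Matrix d d ℝ) : Matrix d d ℝ :=
  Matrix.diagonal (fun i => M i i)

lemma frob_sq_eq_trace {d : Type*} [Fintype d] (M : Matrix d d ℝ) :
    (∑ i, ∑ j, (M i j) ^ 2) = Matrix.trace (Mᵀ * M) := by
  rw [Matrix.trace]
  rw [Finset.sum_comm]
  simp [Matrix.mul_apply, Matrix.diag, sq]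

lemma frob_conj {d : Type*} [Fintype d] [DecidableEq d]
    (Q A : Matrix d d ℝ) (hQ : Qᵀ * Q = 1) :
    frobeniusNorm' (Q * A * Qᵀ) = frobeniusNorm' A := by
  have hQ' : Q * Qᵀ = 1 := mul_eq_one_comm.mp hQ
  unfold frobeniusNorm'
  rw [frob_sq_eq_trace, frob_sq_eq_trace]
  congr 1
  have e : (Q * A * Qᵀ)ᵀ * (Q * A * Qᵀ) = (Q * Aᵀ * A) * Qᵀ := by
    simp only [Matrix.transpose_mul, Matrix.transpose_transpose, Matrix.mul_assoc]
    rw [← Matrix.mul_assoc Qᵀ Q, hQ, Matrix.one_mul]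
  rw [e, Matrix.trace_mul_comm, ← Matrix.mul_assoc, ← Matrix.mul_assoc, hQ,
    Matrix.one_mul]

theorem stmt_12 (m n : ℕ)
    (QL : Matrix (Fin m) (Fin m) ℝ) (QR : Matrix (Fin n) (Fin n) ℝ)
    (hQL : QLᵀ * QL = 1) (hQR : QRᵀ * QR = 1)
    (lamL : Fin m → ℝ) (lamR : Fin n → ℝ)
    (hlamL : ∀ i, 0 ≤ lamL i) (hlamR : ∀ j, 0 ≤ lamR j)
    (Q : Matrix (Fin m × Fin n) (Fin m × Fin n) ℝ) (hQ : Q = QL ⊗ₖ QR)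
    (CShampoo : Matrix (Fin m × Fin n) (Fin m × Fin n) ℝ)
    (hCS : CShampoo =
      Q * Matrix.diagonal
            (fun ij => Real.sqrt (((Matrix.diagonal lamL) ⊗ₖ (Matrix.diagonal lamR)) ij ij)) *
        Qᵀ) :
    ∀ C : Matrix (Fin m × Fin n) (Fin m × Fin n) ℝ,
      frobeniusNorm' (C - Q * diagPart (Qᵀ * C * Q) * Qᵀ) ≤
        frobeniusNorm' (C - CShampoo) := by
  intro C
  have hQo : Qᵀ * Q = 1 := by
    rw [hQ, ← Matrix.kroneckerMap_transpose, ← Matrix.mul_kronecker_mul, hQL, hQR,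
      Matrix.one_kronecker_one]
  have hQo' : Q * Qᵀ = 1 := mul_eq_one_comm.mp hQo
  set M := Qᵀ * C * Q with hM
  have key : ∀ D : Matrix (Fin m × Fin n) (Fin m × Fin n) ℝ,
      C - Q * D * Qᵀ = Q * (M - D) * Qᵀ := by
    intro D
    rw [Matrix.mul_sub, Matrix.sub_mul, hM]
    congr 1
    have : Q * (Qᵀ * C * Q) * Qᵀ = C := by
      simp only [Matrix.mul_assoc]
      rw [hQo', Matrix.mul_one, ← Matrix.mul_assoc, hQo', Matrix.one_mul]
    rw [this]
  set D' : Matrix (Fin m × Fin n) (Fin m × Fin n) ℝ :=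
    Matrix.diagonal
      (fun ij => Real.sqrt (((Matrix.diagonal lamL) ⊗ₖ (Matrix.diagonal lamR)) ij ij)) with hD'
  rw [hCS, key, key, frob_conj _ _ hQo, frob_conj _ _ hQo]
  unfold frobeniusNorm'
  apply Real.sqrt_le_sqrt
  apply Finset.sum_le_sum
  intro i _
  apply Finset.sum_le_sum
  intro j _
  by_cases h : i = j
  · subst h
    simp [diagPart, Matrix.sub_apply, sq_nonneg]
  · simp [diagPart, Matrix.sub_apply, Matrix.diagonal_apply_ne _ h, hD']
end
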